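/- Let A be a complete local Noetherian domain of characteristic p with finite residue field 𝔽 ⊆ A and maximal ideal m, and let Γ ⊆ GL_2(A) be a subgroup such that the reduction map Γ → GL_2(𝔽) has nontrivial kernel and such that the residual representation (the image of Γ in GL_2(𝔽)) acts absolutely irreducibly on 𝔽². Then Γ contains an element whose trace does not lie in 𝔽; in particular Γ contains an element with an eigenvalue of infinite order. -/

import Mathlib

open Matrix Polynomial

private lemma stmt7_line_lem {K : Type*} [Field K] (v u w : Fin 2 → K) (hv : v ≠ 0)
    (hvu : v 0 * u 0 + v 1 * u 1 = 0) (hu : u ≠ 0)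
    (hvw : v 0 * w 0 + v 1 * w 1 = 0) : ∃ c : K, w = c • u := by
  by_cases h0 : v 0 ≠ 0
  · have hu1 : u 1 ≠ 0 := by
      intro h1
      apply hu
      have h2 : u 0 = 0 := by
        have hz : v 0 * u 0 = 0 := by linear_combination hvu - v 1 * h1
        exact (mul_eq_zero.1 hz).resolve_left h0
      funext i; fin_cases i <;> simp [h2, h1]
    refine ⟨w 1 / u 1, ?_⟩
    funext i
    have key : w 0 * u 1 = w 1 * u 0 := by
      apply mul_left_cancel₀ h0
      linear_combination u 1 * hvw - w 1 * hvu
    fin_cases i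
    · show w 0 = w 1 / u 1 * u 0
      field_simp
      linear_combination key
    · show w 1 = w 1 / u 1 * u 1
      field_simp
  · push_neg at h0
    have h1 : v 1 ≠ 0 := by
      intro h1; exact hv (by funext i; fin_cases i <;> simp [h0, h1])
    have hu1 : u 1 = 0 := by
      have hz : v 1 * u 1 = 0 := by linear_combination hvu - u 0 * h0
      exact (mul_eq_zero.1 hz).resolve_left h1
    have hw1 : w 1 = 0 := by
      have hz : v 1 * w 1 = 0 := by linear_combination hvw - w 0 * h0
      exact (mul_eq_zero.1 hz).resolve_left h1
    have hu0 : u 0 ≠ 0 := by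
      intro h; exact hu (by funext i; fin_cases i <;> simp [h, hu1])
    refine ⟨w 0 / u 0, ?_⟩
    funext i
    fin_cases i
    · show w 0 = w 0 / u 0 * u 0
      field_simp
    · show w 1 = w 0 / u 0 * u 1
      simp [hu1, hw1]

private lemma stmt7_det_add_fin_two {K : Type*} [CommRing K] (P Q : Matrix (Fin 2) (Fin 2) K) :
    (P + Q).det = P.det + Q.det + (P.trace * Q.trace - (P * Q).trace) := by
  simp [Matrix.det_fin_two, Matrix.trace_fin_two, Matrix.mul_apply, Fin.sum_univ_two]
  ring

private lemma stmt7_rank_one_fact {K : Type*} [Field K] (M : Matrix (Fin 2) (Fin 2) K) (hM : M ≠ 0)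
    (htr : M.trace = 0) (hdet : M.det = 0) :
    ∃ u v : Fin 2 → K, u ≠ 0 ∧ v ≠ 0 ∧ ∀ i j, M i j = u i * v j := by
  rw [Matrix.trace_fin_two] at htr
  rw [Matrix.det_fin_two] at hdet
  by_cases ha : M 0 0 ≠ 0
  · refine ⟨![M 0 0, M 1 0], ![1, M 0 1 / M 0 0], ?_, ?_, ?_⟩
    · intro h
      have := congrFun h 0
      simp at this
      exact ha this
    · intro h
      have := congrFun h 0
      simp at this
    · intro i j
      fin_cases i <;> fin_cases j
      · show M 0 0 = M 0 0 * 1; ring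
      · show M 0 1 = M 0 0 * (M 0 1 / M 0 0); field_simp
      · show M 1 0 = M 1 0 * 1; ring
      · show M 1 1 = M 1 0 * (M 0 1 / M 0 0)
        have hkey : M 1 0 * M 0 1 = M 0 0 * M 1 1 := by linear_combination -hdet
        rw [mul_div_assoc', hkey, mul_div_cancel_left₀ _ ha]
  · push_neg at ha
    have hd : M 1 1 = 0 := by linear_combination htr - ha
    have hbc : M 0 1 * M 1 0 = 0 := by linear_combination M 1 1 * ha - hdet
    by_cases hb : M 0 1 ≠ 0
    · have hc : M 1 0 = 0 := (mul_eq_zero.1 hbc).resolve_left hb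
      refine ⟨![1, 0], ![0, M 0 1], ?_, ?_, ?_⟩
      · intro h; have := congrFun h 0; simp at this
      · intro h; have := congrFun h 1; simp at this; exact hb this
      · intro i j; fin_cases i <;> fin_cases j <;>
          simp only [Matrix.cons_val_zero, Matrix.cons_val_one, Matrix.head_cons] <;>
          first
            | (show M 0 0 = _; simp [ha])
            | (show M 0 1 = _; simp)
            | (show M 1 0 = _; simp [hc])
            | (show M 1 1 = _; simp [hd])
    · push_neg at hb
      have hc : M 1 0 ≠ 0 := by
        intro hc
        exact hM (by ext i j; fin_cases i <;> fin_cases j <;> simp_all)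
      refine ⟨![0, 1], ![M 1 0, 0], ?_, ?_, ?_⟩
      · intro h; have := congrFun h 1; simp at this
      · intro h; have := congrFun h 0; simp at this; exact hc this
      · intro i j; fin_cases i <;> fin_cases j <;>
          first
            | (show M 0 0 = _; simp [ha])
            | (show M 0 1 = _; simp [hb])
            | (show M 1 0 = _; simp)
            | (show M 1 1 = _; simp [hd])

-- step 2: singular traceless case
private lemma stmt7_eig_of_singular {K : Type*} [Field K] (G : Set (Matrix (Fin 2) (Fin 2) K))
    (M : Matrix (Fin 2) (Fin 2) K) (hM : M ≠ 0) (htrM : M.trace = 0) (hdetM : M.det = 0)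
    (htr : ∀ X ∈ G, (M * X).trace = 0) :
    ∃ v : Fin 2 → K, v ≠ 0 ∧ ∀ X ∈ G, ∃ c : K, X *ᵥ v = c • v := by
  obtain ⟨u, v, hu, hv, hfac⟩ := stmt7_rank_one_fact M hM htrM hdetM
  have hvu : v 0 * u 0 + v 1 * u 1 = 0 := by
    have := htrM
    rw [Matrix.trace_fin_two, hfac 0 0, hfac 1 1] at this
    linear_combination this
  refine ⟨u, hu, ?_⟩
  intro X hX
  have hdot : v 0 * (X *ᵥ u) 0 + v 1 * (X *ᵥ u) 1 = 0 := by
    have h0 := htr X hX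
    rw [Matrix.trace_fin_two] at h0
    simp only [Matrix.mul_apply, Fin.sum_univ_two, Matrix.mulVec, dotProduct,
      Fin.sum_univ_two] at h0 ⊢
    rw [hfac 0 0, hfac 0 1, hfac 1 0, hfac 1 1] at h0
    linear_combination h0
  exact stmt7_line_lem v u (X *ᵥ u) hv hvu hu hdot

private lemma stmt7_common_eigenvector {K : Type*} [Field K] [IsAlgClosed K]
    (G : Set (Matrix (Fin 2) (Fin 2) K)) (h1 : (1 : Matrix (Fin 2) (Fin 2) K) ∈ G)
    (hmul : ∀ X ∈ G, ∀ Y ∈ G, X * Y ∈ G)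
    (M : Matrix (Fin 2) (Fin 2) K) (hM : M ≠ 0)
    (htr : ∀ X ∈ G, (M * X).trace = 0) :
    ∃ v : Fin 2 → K, v ≠ 0 ∧ ∀ X ∈ G, ∃ c : K, X *ᵥ v = c • v := by
  by_cases hscal : ∀ X ∈ G, ∃ c : K, X = c • (1 : Matrix (Fin 2) (Fin 2) K)
  · refine ⟨![1, 0], ?_, ?_⟩
    · intro h; have := congrFun h 0; simp at this
    · intro X hX
      obtain ⟨c, hc⟩ := hscal X hX
      exact ⟨c, by rw [hc]; simp [Matrix.smul_mulVec]⟩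
  · push_neg at hscal
    obtain ⟨X₀, hX₀G, hX₀⟩ := hscal
    have htrM : M.trace = 0 := by simpa using htr 1 h1
    by_cases hdetM : M.det = 0
    · exact stmt7_eig_of_singular G M hM htrM hdetM htr
    · -- M invertible; build singular combination
      set M' := M * X₀ with hM'
      have htrM' : M'.trace = 0 := htr X₀ hX₀G
      have hNprop : ∀ t : K, ∀ X ∈ G, ((t • M + M') * X).trace = 0 := by
        intro t X hX
        rw [add_mul, Matrix.smul_mul, Matrix.trace_add, Matrix.trace_smul, htr X hX,
          hM', Matrix.mul_assoc]
        rw [htr _ (hmul X₀ hX₀G X hX)]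
        simp
      have hindep : ∀ c : K, M' ≠ c • M := by
        intro c hc
        apply hX₀ c
        have hMU : IsUnit M.det := isUnit_iff_ne_zero.2 hdetM
        have := congrArg (fun Y => M⁻¹ * Y) hc
        rw [hM', ← Matrix.mul_assoc, Matrix.nonsing_inv_mul M hMU, Matrix.one_mul] at this
        rw [this, Matrix.mul_smul, Matrix.nonsing_inv_mul M hMU]
      -- find t with det (t • M + M') = 0
      obtain ⟨t, ht⟩ : ∃ t : K, M.det * t ^ 2 + (M.trace * M'.trace - (M * M').trace) * t
          + M'.det = 0 := by
        obtain ⟨t, ht⟩ := IsAlgClosed.exists_root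
          (C M.det * X ^ 2 + C (M.trace * M'.trace - (M * M').trace) * X + C M'.det)
          (by rw [Polynomial.degree_quadratic hdetM]; exact (by norm_num))
        refine ⟨t, ?_⟩
        have := ht
        simp only [IsRoot, eval_add, eval_mul, eval_pow, eval_C, eval_X] at this
        linear_combination this
      set N := t • M + M' with hN
      have hNne : N ≠ 0 := by
        intro h
        apply hindep (-t)
        rw [neg_smul]
        have h2 : t • M + M' = 0 := by rw [← hN]; exact h
        exact eq_neg_of_add_eq_zero_right h2
      have hNtr : N.trace = 0 := by
        rw [hN, Matrix.trace_add, Matrix.trace_smul, htrM, htrM']; simp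
      have hNdet : N.det = 0 := by
        rw [hN, stmt7_det_add_fin_two, Matrix.det_smul, Matrix.trace_smul, Matrix.smul_mul,
          Matrix.trace_smul]
        simp only [Fintype.card_fin, smul_eq_mul]
        linear_combination ht
      exact stmt7_eig_of_singular G N hNne hNtr hNdet (hNprop t)


private lemma stmt7_pow_pow_iter {R : Type*} [Monoid R] (x : R) (q : ℕ) (h : x ^ q = x) :
    ∀ n : ℕ, x ^ q ^ n = x := by
  intro n
  induction n with
  | zero => simp
  | succ n ih => rw [pow_succ, pow_mul, ih, h]

private lemma stmt7_frob_fix {K : Type*} [Field K] {p : ℕ} (hp : p.Prime) [CharP K p] (x : K) (k : ℕ)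
    (hk : 0 < k) (hx : x ^ k = 1) : ∃ r : ℕ, 1 ≤ r ∧ x ^ p ^ r = x := by
  haveI : Fact p.Prime := ⟨hp⟩
  have hfin : IsOfFinOrder x := isOfFinOrder_iff_pow_eq_one.2 ⟨k, hk, hx⟩
  set d := orderOf x with hd
  have hd0 : 0 < d := hfin.orderOf_pos
  have hxd : x ^ d = 1 := pow_orderOf_eq_one x
  have hpd : ¬ p ∣ d := by
    rintro ⟨m, hm⟩
    have hm0 : 0 < m := by
      rcases Nat.eq_zero_or_pos m with h | h
      · rw [h, mul_zero] at hm; omega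
      · exact h
    have hym : (x ^ m) ^ p = 1 := by
      rw [← pow_mul, mul_comm, ← hm, hxd]
    have hxm : x ^ m = 1 := by
      have hsub : (x ^ m - 1) ^ p = 0 := by
        rw [sub_pow_char, hym, one_pow, sub_self]
      have := (pow_eq_zero_iff hp.ne_zero).1 hsub
      exact sub_eq_zero.1 this
    have hdvd : d ∣ m := orderOf_dvd_iff_pow_eq_one.2 hxm
    have : d ≤ m := Nat.le_of_dvd hm0 hdvd
    have hlt : m < d := by
      rw [hm]
      have := hp.two_le
      calc m = 1 * m := (one_mul m).symm
      _ < p * m := by exact Nat.mul_lt_mul_of_lt_of_le hp.one_lt (le_refl m) hm0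
    omega
  have hcop : Nat.Coprime p d := (Nat.Prime.coprime_iff_not_dvd hp).2 hpd
  rcases Nat.lt_or_ge d 2 with h1 | h2
  · have hdeq : d = 1 := by omega
    have hx1 : x = 1 := orderOf_eq_one_iff.1 (hd ▸ hdeq)
    exact ⟨1, le_refl 1, by rw [hx1, one_pow]⟩
  · haveI : NeZero d := ⟨hd0.ne'⟩
    set u := ZMod.unitOfCoprime p hcop with hu
    set r := orderOf u with hr
    have hr0 : 0 < r := orderOf_pos u
    have hur : u ^ r = 1 := pow_orderOf_eq_one u
    have hcast : ((p ^ r : ℕ) : ZMod d) = ((1 : ℕ) : ZMod d) := by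
      have := congrArg (Units.val) hur
      rw [Units.val_pow_eq_pow_val, ZMod.coe_unitOfCoprime, Units.val_one] at this
      push_cast
      exact this
    have hmod : p ^ r ≡ 1 [MOD d] := (ZMod.natCast_eq_natCast_iff _ _ _).1 hcast
    have hple : 1 ≤ p ^ r := Nat.one_le_pow _ _ hp.pos
    have hdvd : d ∣ p ^ r - 1 := (Nat.modEq_iff_dvd' hple).1 hmod.symm
    have hpow1 : x ^ (p ^ r - 1) = 1 := orderOf_dvd_iff_pow_eq_one.1 hdvd
    refine ⟨r, hr0, ?_⟩
    calc x ^ p ^ r = x ^ (p ^ r - 1 + 1) := by rw [Nat.sub_add_cancel hple]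
    _ = x ^ (p ^ r - 1) * x := by rw [pow_succ]
    _ = x := by rw [hpow1, one_mul]

private lemma stmt7_charpoly_fin_two {R : Type*} [CommRing R] (M : Matrix (Fin 2) (Fin 2) R) :
    M.charpoly = Polynomial.X ^ 2 - Polynomial.C M.trace * Polynomial.X + Polynomial.C M.det := by
  rw [Matrix.charpoly, Matrix.det_fin_two, Matrix.trace_fin_two, Matrix.det_fin_two]
  simp [charmatrix_apply_eq, charmatrix_apply_ne]
  ring

private lemma stmt7_key_rows {K : Type*} [Field K] [IsAlgClosed K]
    (G : Set (Matrix (Fin 2) (Fin 2) K)) (h1 : (1 : Matrix (Fin 2) (Fin 2) K) ∈ G)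
    (hmul : ∀ X ∈ G, ∀ Y ∈ G, X * Y ∈ G)
    (heig : ¬ ∃ v : Fin 2 → K, v ≠ 0 ∧ ∀ X ∈ G, ∃ c : K, X *ᵥ v = c • v) :
    ∃ Xs : Fin 2 × Fin 2 → Matrix (Fin 2) (Fin 2) K, (∀ i, Xs i ∈ G) ∧
      (Matrix.of fun i jl => Xs i jl.2 jl.1).det ≠ 0 := by
  classical
  set V := (Fin 2 × Fin 2 → K)
  set S : Set V := {v | ∃ X ∈ G, v = fun jl => X jl.2 jl.1} with hS
  -- span S = ⊤
  have hspan : Submodule.span K S = ⊤ := by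
    by_contra hne
    obtain ⟨x, hx⟩ : ∃ x : V, x ∉ Submodule.span K S := by
      by_contra hc
      push_neg at hc
      exact hne (Submodule.eq_top_iff'.2 hc)
    obtain ⟨f, hfx, hfbot⟩ := Submodule.exists_dual_map_eq_bot_of_notMem hx inferInstance
    have hfS : ∀ v ∈ S, f v = 0 := by
      intro v hv
      have : f v ∈ Submodule.map f (Submodule.span K S) :=
        Submodule.mem_map_of_mem (Submodule.subset_span hv)
      rw [hfbot] at this
      exact (Submodule.mem_bot K).1 this
    set M : Matrix (Fin 2) (Fin 2) K :=
      Matrix.of (fun j l => f (fun m => if (j, l) = m then 1 else 0)) with hM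
    have hMne : M ≠ 0 := by
      intro h
      have hf0 : ∀ y : V, f y = 0 := by
        intro y
        rw [LinearMap.pi_apply_eq_sum_univ f y]
        apply Finset.sum_eq_zero
        intro i _
        have hMe : (f fun j => if i = j then 1 else 0) = M i.1 i.2 := rfl
        rw [smul_eq_mul, hMe, h]
        simp
      exact hfx (hf0 x)
    have hMtr : ∀ X ∈ G, (M * X).trace = 0 := by
      intro X hX
      have hXS : (fun jl : Fin 2 × Fin 2 => X jl.2 jl.1) ∈ S := ⟨X, hX, rfl⟩
      have := hfS _ hXS
      rw [LinearMap.pi_apply_eq_sum_univ f] at this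
      rw [Matrix.trace_fin_two, Matrix.mul_apply, Matrix.mul_apply, Fin.sum_univ_two,
        Fin.sum_univ_two]
      rw [Fintype.sum_prod_type] at this
      simp only [Fin.sum_univ_two, smul_eq_mul] at this
      have hM00 : (f fun m => if ((0 : Fin 2), (0 : Fin 2)) = m then 1 else 0) = M 0 0 := rfl
      have hM01 : (f fun m => if ((0 : Fin 2), (1 : Fin 2)) = m then 1 else 0) = M 0 1 := rfl
      have hM10 : (f fun m => if ((1 : Fin 2), (0 : Fin 2)) = m then 1 else 0) = M 1 0 := rfl
      have hM11 : (f fun m => if ((1 : Fin 2), (1 : Fin 2)) = m then 1 else 0) = M 1 1 := rfl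
      rw [hM00, hM01, hM10, hM11] at this
      linear_combination this
    exact heig (stmt7_common_eigenvector G h1 hmul M hMne hMtr)
  -- extract a basis from S
  obtain ⟨t, hts, htspan, htli⟩ := exists_linearIndependent K S
  rw [hspan] at htspan
  have htfin : t.Finite := htli.setFinite
  haveI := htfin.fintype
  have hb : Module.Basis t K V := Module.Basis.mk htli (by rw [Subtype.range_coe, htspan])
  have hcard : Fintype.card t = 4 := by
    have h1 := Module.finrank_eq_card_basis hb
    have h2 : Module.finrank K V = 4 := by
      rw [Module.finrank_pi]
      simp
    omega
  have e : (Fin 2 × Fin 2) ≃ t := Fintype.equivOfCardEq (by rw [hcard]; simp)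
  -- each element of t is a row coming from G
  have hrow : ∀ i : Fin 2 × Fin 2, ∃ X ∈ G, ((e i : V)) = fun jl => X jl.2 jl.1 := by
    intro i
    exact hts (e i).2
  choose Xs hXsG hXseq using hrow
  refine ⟨Xs, hXsG, ?_⟩
  intro hdet
  obtain ⟨v, hvne, hv⟩ := Matrix.exists_vecMul_eq_zero_iff.2 hdet
  have hli2 : LinearIndependent K (fun i : Fin 2 × Fin 2 => ((e i : V))) :=
    htli.comp e (e.injective)
  have hsum : ∑ i : Fin 2 × Fin 2, v i • ((e i : V)) = 0 := by
    funext jl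
    have hthis : ∑ i : Fin 2 × Fin 2, v i * (Matrix.of fun i jl => Xs i jl.2 jl.1) i jl = 0 :=
      congrFun hv jl
    show (∑ i : Fin 2 × Fin 2, v i • ((e i : V))) jl = 0
    rw [Finset.sum_apply]
    calc ∑ i : Fin 2 × Fin 2, (v i • ((e i : V))) jl
        = ∑ i : Fin 2 × Fin 2, v i * ((e i : V) jl) := rfl
      _ = ∑ i : Fin 2 × Fin 2, v i * (Matrix.of fun i jl => Xs i jl.2 jl.1) i jl := by
          apply Finset.sum_congr rfl
          intro i _
          rw [hXseq i]
          rfl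
      _ = 0 := hthis
  have := Fintype.linearIndependent_iff.1 hli2 v hsum
  exact hvne (funext fun i => this i)
/-- Let `A` be a complete local Noetherian domain of characteristic `p` with finite residue
field `𝔽 ⊆ A`, and let `Γ ⊆ GL₂(A)` be a subgroup such that the reduction map
`Γ → GL₂(𝔽)` has nontrivial kernel and the residual representation is absolutely irreducible
(no common eigenvector over the algebraic closure of the residue field). Then `Γ` contains an
element whose trace does not lie in `𝔽`; in particular `Γ` contains an element with an
eigenvalue of infinite order. -/
theorem statement7 {A : Type*} [CommRing A] [IsDomain A] [IsLocalRing A] [IsNoetherianRing A]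
    [IsAdicComplete (IsLocalRing.maximalIdeal A) A]
    (p : ℕ) (hp : p.Prime) [CharP A p]
    {𝔽 : Type*} [Field 𝔽] [Fintype 𝔽] [Algebra 𝔽 A]
    -- `𝔽 ⊆ A` maps isomorphically onto the residue field of `A`
    (hres : Function.Bijective ((IsLocalRing.residue A).comp (algebraMap 𝔽 A)))
    (Γ : Subgroup (Matrix (Fin 2) (Fin 2) A)ˣ)
    -- the reduction map `Γ → GL₂(𝔽)` has nontrivial kernel
    (hker : ∃ g ∈ Γ, g ≠ 1 ∧
      ((g : Matrix (Fin 2) (Fin 2) A)).map (IsLocalRing.residue A) = 1)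
    -- the residual representation is absolutely irreducible: no common eigenvector over the
    -- algebraic closure of the residue field
    (hirr : ∀ v : Fin 2 → AlgebraicClosure (IsLocalRing.ResidueField A), v ≠ 0 →
      ¬ ∀ g ∈ Γ, ∃ c : AlgebraicClosure (IsLocalRing.ResidueField A),
        (((g : Matrix (Fin 2) (Fin 2) A)).map fun a =>
            algebraMap (IsLocalRing.ResidueField A)
              (AlgebraicClosure (IsLocalRing.ResidueField A))
              (IsLocalRing.residue A a)).mulVec v = c • v) :
    (∃ g ∈ Γ, ((g : Matrix (Fin 2) (Fin 2) A)).trace ∉ Set.range (algebraMap 𝔽 A)) ∧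
    (∃ g ∈ Γ, ∃ x : AlgebraicClosure (FractionRing A),
      Polynomial.aeval x (Matrix.charpoly (g : Matrix (Fin 2) (Fin 2) A)) = 0 ∧
      ∀ k : ℕ, 0 < k → x ^ k ≠ 1) := by
  classical
  haveI : Fact p.Prime := ⟨hp⟩
  set K := AlgebraicClosure (IsLocalRing.ResidueField A) with hKdef
  set ρ : A →+* K := (algebraMap (IsLocalRing.ResidueField A) K).comp (IsLocalRing.residue A)
    with hρdef
  set G : Set (Matrix (Fin 2) (Fin 2) K) :=
    {X | ∃ g, g ∈ Γ ∧ X = ((g : Matrix (Fin 2) (Fin 2) A)).map ρ} with hGdef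
  have hG1 : (1 : Matrix (Fin 2) (Fin 2) K) ∈ G :=
    ⟨1, one_mem Γ, by rw [Units.val_one, Matrix.map_one ρ (map_zero ρ) (map_one ρ)]⟩
  have hGmul : ∀ X ∈ G, ∀ Y ∈ G, X * Y ∈ G := by
    rintro X ⟨g, hg, rfl⟩ Y ⟨h, hh, rfl⟩
    exact ⟨g * h, mul_mem hg hh, by rw [Units.val_mul, Matrix.map_mul]⟩
  have heig : ¬ ∃ v : Fin 2 → K, v ≠ 0 ∧ ∀ X ∈ G, ∃ c : K, X *ᵥ v = c • v := by
    rintro ⟨v, hv, hall⟩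
    apply hirr v hv
    intro g hg
    obtain ⟨c, hc⟩ := hall _ ⟨g, hg, rfl⟩
    exact ⟨c, hc⟩
  -- Part 1
  have h1 : ∃ g ∈ Γ, ((g : Matrix (Fin 2) (Fin 2) A)).trace ∉ Set.range (algebraMap 𝔽 A) := by
    by_contra hcon
    push_neg at hcon
    obtain ⟨g₁, hg₁Γ, hg₁ne, hg₁red⟩ := hker
    set N : Matrix (Fin 2) (Fin 2) A := (g₁ : Matrix (Fin 2) (Fin 2) A) - 1 with hNdef
    have hNne : N ≠ 0 := by
      intro h
      rw [hNdef, sub_eq_zero] at h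
      exact hg₁ne (Units.ext (by rw [h, Units.val_one]))
    have hNmem : ∀ i j, N i j ∈ IsLocalRing.maximalIdeal A := by
      intro i j
      have hentry : IsLocalRing.residue A ((g₁ : Matrix (Fin 2) (Fin 2) A) i j)
          = (1 : Matrix (Fin 2) (Fin 2) (IsLocalRing.ResidueField A)) i j := by
        have h := congrFun (congrFun hg₁red i) j
        simpa [Matrix.map_apply] using h
      have hone : IsLocalRing.residue A ((1 : Matrix (Fin 2) (Fin 2) A) i j)
          = (1 : Matrix (Fin 2) (Fin 2) (IsLocalRing.ResidueField A)) i j := by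
        by_cases hij : i = j <;> simp [Matrix.one_apply, hij]
      have hval : IsLocalRing.residue A (N i j) = 0 := by
        rw [hNdef, Matrix.sub_apply, map_sub, hentry, hone, sub_self]
      exact Ideal.Quotient.eq_zero_iff_mem.1 hval
    have hcap : ∀ x : A, x ∈ Set.range (algebraMap 𝔽 A) →
        x ∈ IsLocalRing.maximalIdeal A → x = 0 := by
      rintro x ⟨f, rfl⟩ hm
      have hz0 : IsLocalRing.residue A ((algebraMap 𝔽 A) f) = 0 :=
        Ideal.Quotient.eq_zero_iff_mem.2 hm
      have h0 : ((IsLocalRing.residue A).comp (algebraMap 𝔽 A)) f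
          = ((IsLocalRing.residue A).comp (algebraMap 𝔽 A)) 0 := by
        rw [RingHom.comp_apply, RingHom.comp_apply, hz0, map_zero, map_zero]
      rw [hres.1 h0, map_zero]
    have htr0 : ∀ g : (Matrix (Fin 2) (Fin 2) A)ˣ, g ∈ Γ →
        (N * (g : Matrix (Fin 2) (Fin 2) A)).trace = 0 := by
      intro g hg
      apply hcap
      · have e1 : N * (g : Matrix (Fin 2) (Fin 2) A)
            = ((g₁ * g : (Matrix (Fin 2) (Fin 2) A)ˣ) : Matrix (Fin 2) (Fin 2) A)
              - (g : Matrix (Fin 2) (Fin 2) A) := by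
          rw [Units.val_mul, hNdef, sub_mul, one_mul]
        rw [e1, Matrix.trace_sub]
        obtain ⟨f1, hf1⟩ := hcon (g₁ * g) (mul_mem hg₁Γ hg)
        obtain ⟨f2, hf2⟩ := hcon g hg
        exact ⟨f1 - f2, by rw [map_sub, hf1, hf2]⟩
      · rw [Matrix.trace]
        apply Submodule.sum_mem
        intro i _
        rw [Matrix.diag_apply, Matrix.mul_apply]
        apply Submodule.sum_mem
        intro l _
        exact Ideal.mul_mem_right _ _ (hNmem i l)
    obtain ⟨Xs, hXsG, hXdet⟩ := stmt7_key_rows G hG1 hGmul heig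
    have hXsG' : ∀ i : Fin 2 × Fin 2, ∃ g, g ∈ Γ ∧
        Xs i = ((g : Matrix (Fin 2) (Fin 2) A)).map ρ := fun i => hXsG i
    choose gs hgsΓ hgseq using hXsG'
    set B : Matrix (Fin 2 × Fin 2) (Fin 2 × Fin 2) A :=
      Matrix.of (fun i jl => (gs i : Matrix (Fin 2) (Fin 2) A) jl.2 jl.1) with hBdef
    have hBmap : B.map ρ = Matrix.of fun i jl => Xs i jl.2 jl.1 := by
      ext i jl
      simp only [Matrix.map_apply, Matrix.of_apply, hBdef]
      rw [hgseq i]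
      rfl
    have hdetA : IsUnit B.det := by
      by_contra hnu
      have hmm : B.det ∈ IsLocalRing.maximalIdeal A := (IsLocalRing.mem_maximalIdeal _).2 hnu
      have hz0 : IsLocalRing.residue A B.det = 0 := Ideal.Quotient.eq_zero_iff_mem.2 hmm
      have hz : ρ B.det = 0 := by
        rw [hρdef, RingHom.comp_apply, hz0, map_zero]
      apply hXdet
      have hdd : (B.map ρ).det = ρ B.det := by
        rw [RingHom.map_det]
        rfl
      rw [← hBmap, hdd, hz]
    obtain ⟨U, hU⟩ := (Matrix.isUnit_iff_isUnit_det B).2 hdetA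
    set nvec : Fin 2 × Fin 2 → A := fun jl => N jl.1 jl.2 with hnvecdef
    have hBn : B *ᵥ nvec = 0 := by
      funext i
      show ∑ jl : Fin 2 × Fin 2, B i jl * nvec jl = 0
      rw [Fintype.sum_prod_type]
      have htr := htr0 (gs i) (hgsΓ i)
      rw [Matrix.trace_fin_two] at htr
      simp only [Matrix.mul_apply, Fin.sum_univ_two] at htr
      simp only [hBdef, Matrix.of_apply, hnvecdef, Fin.sum_univ_two]
      linear_combination htr
    have hn0 : nvec = 0 := by
      have hinv : ((U⁻¹ : (Matrix (Fin 2 × Fin 2) (Fin 2 × Fin 2) A)ˣ) :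
          Matrix (Fin 2 × Fin 2) (Fin 2 × Fin 2) A) * B = 1 := by
        rw [← hU]; exact U.inv_mul
      calc nvec = (1 : Matrix (Fin 2 × Fin 2) (Fin 2 × Fin 2) A) *ᵥ nvec :=
            (Matrix.one_mulVec nvec).symm
      _ = (((U⁻¹ : (Matrix (Fin 2 × Fin 2) (Fin 2 × Fin 2) A)ˣ) :
            Matrix (Fin 2 × Fin 2) (Fin 2 × Fin 2) A) * B) *ᵥ nvec := by rw [hinv]
      _ = ((U⁻¹ : (Matrix (Fin 2 × Fin 2) (Fin 2 × Fin 2) A)ˣ) :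
            Matrix (Fin 2 × Fin 2) (Fin 2 × Fin 2) A) *ᵥ (B *ᵥ nvec) := by
            rw [← Matrix.mulVec_mulVec]
      _ = 0 := by rw [hBn, Matrix.mulVec_zero]
    apply hNne
    ext i j
    have h := congrFun hn0 (i, j)
    simpa [hnvecdef] using h
  refine ⟨h1, ?_⟩
  -- Part 2
  obtain ⟨g, hgΓ, hgtr⟩ := h1
  refine ⟨g, hgΓ, ?_⟩
  by_contra h2
  push_neg at h2
  set L := AlgebraicClosure (FractionRing A) with hLdef
  set φ : A →+* L := algebraMap A L with hφdef
  have hφinj : Function.Injective φ := by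
    rw [hφdef, IsScalarTower.algebraMap_eq A (FractionRing A) L]
    exact (algebraMap (FractionRing A) L).injective.comp
      (IsFractionRing.injective A (FractionRing A))
  haveI : CharP L p := charP_of_injective_algebraMap hφinj p
  set q := Matrix.charpoly (g : Matrix (Fin 2) (Fin 2) A) with hqdef
  have hqm : q.Monic := Matrix.charpoly_monic _
  have hqdeg : (q.map φ).degree = 2 := by
    rw [Polynomial.Monic.degree_map hqm, hqdef, Matrix.charpoly_degree_eq_dim]
    simp
  obtain ⟨x₁, hx₁⟩ := IsAlgClosed.exists_root (q.map φ) (by rw [hqdeg]; norm_num)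
  have haev : ∀ x : L, Polynomial.aeval x q = Polynomial.eval x (q.map φ) := by
    intro x
    rw [Polynomial.aeval_def, Polynomial.eval_map]
  set t := Matrix.trace (g : Matrix (Fin 2) (Fin 2) A) with htdef
  have hqf : q = Polynomial.X ^ 2 - Polynomial.C t * Polynomial.X
      + Polynomial.C (Matrix.det (g : Matrix (Fin 2) (Fin 2) A)) := stmt7_charpoly_fin_two _
  have heval : ∀ x : L, Polynomial.eval x (q.map φ)
      = x ^ 2 - φ t * x + φ (Matrix.det (g : Matrix (Fin 2) (Fin 2) A)) := by
    intro x
    rw [hqf]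
    simp [Polynomial.map_add, Polynomial.map_sub, Polynomial.map_pow, Polynomial.map_mul]
  have hroot1 : x₁ ^ 2 - φ t * x₁ + φ (Matrix.det (g : Matrix (Fin 2) (Fin 2) A)) = 0 := by
    rw [← heval]
    exact hx₁
  obtain ⟨k₁, hk₁, hxk₁⟩ := h2 x₁ (by rw [haev x₁]; exact hx₁)
  set x₂ := φ t - x₁ with hx₂def
  have hroot2 : Polynomial.aeval x₂ q = 0 := by
    rw [haev, heval]
    linear_combination hroot1
  obtain ⟨k₂, hk₂, hxk₂⟩ := h2 x₂ hroot2
  obtain ⟨r₁, hr₁, hf₁⟩ := stmt7_frob_fix hp x₁ k₁ hk₁ hxk₁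
  obtain ⟨r₂, hr₂, hf₂⟩ := stmt7_frob_fix hp x₂ k₂ hk₂ hxk₂
  set r := r₁ * r₂ with hrdef
  have hr1 : 1 ≤ r := by
    rw [hrdef]
    exact Nat.one_le_iff_ne_zero.2 (Nat.mul_ne_zero (by omega) (by omega))
  have hx₁r : x₁ ^ p ^ r = x₁ := by
    rw [hrdef, pow_mul]
    exact stmt7_pow_pow_iter x₁ (p ^ r₁) hf₁ r₂
  have hx₂r : x₂ ^ p ^ r = x₂ := by
    rw [hrdef, mul_comm r₁ r₂, pow_mul]
    exact stmt7_pow_pow_iter x₂ (p ^ r₂) hf₂ r₁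
  have htrp : φ t ^ p ^ r = φ t := by
    have hsum : φ t = x₁ + x₂ := by rw [hx₂def]; ring
    rw [hsum, add_pow_char_pow, hx₁r, hx₂r]
  have htA : t ^ p ^ r = t := by
    apply hφinj
    rw [map_pow, htrp]
  haveI : CharP 𝔽 p := by
    have hinj𝔽 : Function.Injective (algebraMap 𝔽 A) := (algebraMap 𝔽 A).injective
    constructor
    intro n
    constructor
    · intro h
      have hnA : (n : A) = 0 := by rw [← map_natCast (algebraMap 𝔽 A) n, h, map_zero]
      exact (CharP.cast_eq_zero_iff A p n).1 hnA
    · intro h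
      apply hinj𝔽
      rw [map_natCast, (CharP.cast_eq_zero_iff A p n).2 h, map_zero]
  obtain ⟨E, hpp, hE⟩ := FiniteField.card 𝔽 p
  obtain ⟨f, hf⟩ := hres.2 (IsLocalRing.residue A t)
  set s := algebraMap 𝔽 A f with hsdef
  have hsE : s ^ p ^ (E : ℕ) = s := by
    rw [hsdef, ← map_pow]
    congr 1
    rw [← hE]
    exact FiniteField.pow_card f
  set w := r * (E : ℕ) with hwdef
  have hw1 : 1 ≤ w := by
    rw [hwdef]
    exact Nat.one_le_iff_ne_zero.2 (Nat.mul_ne_zero (by omega) (by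
      have := E.pos
      omega))
  have htw : t ^ p ^ w = t := by
    rw [hwdef, pow_mul]
    exact stmt7_pow_pow_iter t (p ^ r) htA (E : ℕ)
  have hsw : s ^ p ^ w = s := by
    rw [hwdef, mul_comm, pow_mul]
    exact stmt7_pow_pow_iter s (p ^ (E : ℕ)) hsE r
  set u := t - s with hudef
  have huw : u ^ p ^ w = u := by rw [hudef, sub_pow_char_pow, htw, hsw]
  have hune : u ≠ 0 := by
    intro h
    apply hgtr
    have hts : t = s := by rwa [hudef, sub_eq_zero] at h
    exact ⟨f, by rw [← hsdef, ← hts]⟩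
  have hpw2 : 2 ≤ p ^ w := by
    calc 2 ≤ p := hp.two_le
    _ = p ^ 1 := (pow_one p).symm
    _ ≤ p ^ w := Nat.pow_le_pow_right hp.pos hw1
  have hu1 : u ^ (p ^ w - 1) = 1 := by
    apply mul_left_cancel₀ hune
    rw [mul_one]
    calc u * u ^ (p ^ w - 1) = u ^ (p ^ w - 1) * u := mul_comm _ _
    _ = u ^ (p ^ w - 1 + 1) := (pow_succ u _).symm
    _ = u ^ p ^ w := by rw [Nat.sub_add_cancel (by omega)]
    _ = u := huw
  have hunit : IsUnit u := by
    apply IsUnit.of_mul_eq_one (a := u) (u ^ (p ^ w - 2))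
    calc u * u ^ (p ^ w - 2) = u ^ (p ^ w - 2) * u := mul_comm _ _
    _ = u ^ (p ^ w - 2 + 1) := (pow_succ u _).symm
    _ = u ^ (p ^ w - 1) := by congr 1; omega
    _ = 1 := hu1
  have humem : u ∈ IsLocalRing.maximalIdeal A := by
    have hru : IsLocalRing.residue A u = 0 := by
      rw [hudef, map_sub]
      have hst : IsLocalRing.residue A s = IsLocalRing.residue A t := by
        rw [hsdef, ← RingHom.comp_apply]
        exact hf
      rw [hst, sub_self]
    exact Ideal.Quotient.eq_zero_iff_mem.1 hru
  exact ((IsLocalRing.mem_maximalIdeal u).1 humem) hunit
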